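/- (Clarkson's inequality, case 1 < p < 2, pointwise form) For 1 < p < 2 and real numbers a, b: |(a − b)/2|^{p/(p−1)} + |(a + b)/2|^{p/(p−1)} ≤ ((1/2)|a|^p + (1/2)|b|^p)^{1/(p−1)}. -/

import Mathlib

open Real

lemma cs2 (x1 x2 y1 y2 : ℝ) :
    x1 * y1 + x2 * y2 ≤ Real.sqrt (x1 ^ 2 + x2 ^ 2) * Real.sqrt (y1 ^ 2 + y2 ^ 2) := by
  rw [← Real.sqrt_mul (by positivity)]
  rcases le_or_gt (x1 * y1 + x2 * y2) 0 with h | h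
  · exact h.trans (Real.sqrt_nonneg _)
  · rw [show x1 * y1 + x2 * y2 = Real.sqrt ((x1 * y1 + x2 * y2) ^ 2) from
      (Real.sqrt_sq h.le).symm]
    apply Real.sqrt_le_sqrt
    nlinarith [sq_nonneg (x1 * y2 - x2 * y1)]

lemma rpow_le_endpoints {r s s0 s1 : ℝ} (hr : 0 < r) (h0 : s0 ≤ s) (h1 : s ≤ s1) :
    r ^ s ≤ r ^ s0 + r ^ s1 := by
  rcases le_total 1 r with h | h
  · exact le_add_of_nonneg_left (by positivity) |>.trans' (Real.rpow_le_rpow_of_exponent_le h h1)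
  · exact le_add_of_nonneg_right (by positivity) |>.trans' (Real.rpow_le_rpow_of_exponent_ge hr h h0)

lemma core (p q : ℝ) (hp1 : 1 < p) (hp2 : p < 2) (hq : q = p / (p - 1))
    (a b : ℝ) (hb : 0 ≤ b) (hba : b ≤ a) :
    (a + b) ^ q + (a - b) ^ q ≤ 2 * (a ^ p + b ^ p) ^ (q - 1) := by
  have hp0 : 0 < p := by linarith
  have hpm1 : 0 < p - 1 := by linarith
  have hq2 : 2 < q := by
    rw [hq, lt_div_iff₀ hpm1]; nlinarith
  have hq0 : 0 < q := by linarith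
  have hpq : p * (q - 1) = q := by rw [hq]; field_simp; ring
  have ha : 0 ≤ a := hb.trans hba
  -- case b = 0
  rcases eq_or_lt_of_le hb with hb0 | hb0
  · rw [← hb0, add_zero, sub_zero, Real.zero_rpow hp0.ne', add_zero,
      ← Real.rpow_mul ha, hpq]
    linarith [Real.rpow_nonneg ha q]
  -- case a = b
  rcases eq_or_lt_of_le hba with hab | hab
  · rw [← hab, sub_self, Real.zero_rpow hq0.ne', add_zero,
      show b + b = 2 * b by ring, show b ^ p + b ^ p = 2 * (b ^ p) by ring,
      Real.mul_rpow (by norm_num) (Real.rpow_nonneg hb p),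
      Real.mul_rpow (by norm_num) hb, ← Real.rpow_mul hb, hpq]
    have h2 : (2:ℝ) * 2 ^ (q-1) = 2 ^ q := by
      rw [show (2:ℝ) * 2 ^ (q-1) = 2 ^ (1:ℝ) * 2 ^ (q-1) by rw [Real.rpow_one],
        ← Real.rpow_add (by norm_num)]
      ring_nf
    rw [show (2:ℝ) * (2 ^ (q-1) * b ^ q) = (2 * 2 ^ (q-1)) * b ^ q by ring, h2]
  -- main case 0 < b < a
  have ha0 : 0 < a := hb0.trans hab
  have hu : 0 < a + b := by linarith
  have hv : 0 < a - b := by linarith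
  set u : ℝ := a + b with hu_def
  set v : ℝ := a - b with hv_def
  set S : ℝ := a ^ p + b ^ p with hS_def
  set R : ℝ := u ^ q + v ^ q with hR_def
  have hS : 0 < S := by positivity
  have hR : 0 < R := by positivity
  set θ : ℝ := 2 / p - 1 with hθ_def
  have hθ0 : 0 < θ := by
    rw [hθ_def]; rw [sub_pos, lt_div_iff₀ hp0]; linarith
  have hθ1 : θ < 1 := by
    rw [hθ_def]; rw [sub_lt_iff_lt_add, div_lt_iff₀ hp0]; linarith
  -- the analytic family
  set G : ℂ → ℂ := fun z => (↑(p / 2) : ℂ) * (1 + z) with hG_def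
  set H : ℂ → ℂ := fun z => (↑(q / 2) : ℂ) * (1 + z) with hH_def
  set f : ℂ → ℂ := fun z =>
      ((a : ℂ) ^ G z + (b : ℂ) ^ G z) * (u : ℂ) ^ H z
    + ((a : ℂ) ^ G z - (b : ℂ) ^ G z) * (v : ℂ) ^ H z with hf_def
  have hGre : ∀ z : ℂ, (G z).re = p / 2 * (1 + z.re) := by
    intro z
    simp [hG_def, Complex.add_re]
  have hHre : ∀ z : ℂ, (H z).re = q / 2 * (1 + z.re) := by
    intro z
    simp [hH_def, Complex.add_re]
  have hnorm : ∀ (r : ℝ), 0 < r → ∀ w : ℂ, ‖(r : ℂ) ^ w‖ = r ^ w.re := by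
    intro r hr w
    rw [Complex.norm_cpow_eq_rpow_re_of_pos hr]
  -- differentiability
  have hGd : Differentiable ℂ G := by
    apply Differentiable.const_mul
    exact (differentiable_const _).add differentiable_id
  have hHd : Differentiable ℂ H := by
    apply Differentiable.const_mul
    exact (differentiable_const _).add differentiable_id
  have hane : (a : ℂ) ≠ 0 := Complex.ofReal_ne_zero.mpr ha0.ne'
  have hbne : (b : ℂ) ≠ 0 := Complex.ofReal_ne_zero.mpr hb0.ne'
  have hune : (u : ℂ) ≠ 0 := Complex.ofReal_ne_zero.mpr hu.ne'
  have hvne : (v : ℂ) ≠ 0 := Complex.ofReal_ne_zero.mpr hv.ne'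
  have hfd : Differentiable ℂ f := by
    apply Differentiable.add
    · exact ((hGd.const_cpow (Or.inl hane)).add (hGd.const_cpow (Or.inl hbne))).mul
        (hHd.const_cpow (Or.inl hune))
    · exact ((hGd.const_cpow (Or.inl hane)).sub (hGd.const_cpow (Or.inl hbne))).mul
        (hHd.const_cpow (Or.inl hvne))
  -- generic norm bound pieces
  have hfle : ∀ z : ℂ, ‖f z‖ ≤
      (‖(a:ℂ) ^ G z + (b:ℂ) ^ G z‖) * ‖(u:ℂ) ^ H z‖
    + (‖(a:ℂ) ^ G z - (b:ℂ) ^ G z‖) * ‖(v:ℂ) ^ H z‖ := by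
    intro z
    calc ‖f z‖ ≤ ‖((a:ℂ) ^ G z + (b:ℂ) ^ G z) * (u:ℂ) ^ H z‖
        + ‖((a:ℂ) ^ G z - (b:ℂ) ^ G z) * (v:ℂ) ^ H z‖ := norm_add_le _ _
      _ = _ := by rw [norm_mul, norm_mul]
  -- bound on the line re = 0
  set M0 : ℝ := Real.sqrt (2 * S) * Real.sqrt R with hM0_def
  have hM0 : ∀ z ∈ Complex.re ⁻¹' {0}, ‖f z‖ ≤ M0 := by
    intro z hz
    have hz0 : z.re = 0 := hz
    have hGz : (G z).re = p / 2 := by rw [hGre, hz0]; ring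
    have hHz : (H z).re = q / 2 := by rw [hHre, hz0]; ring
    have hA : ‖(a:ℂ) ^ G z‖ = a ^ (p/2) := by rw [hnorm a ha0, hGz]
    have hB : ‖(b:ℂ) ^ G z‖ = b ^ (p/2) := by rw [hnorm b hb0, hGz]
    have hU : ‖(u:ℂ) ^ H z‖ = u ^ (q/2) := by rw [hnorm u hu, hHz]
    have hV : ‖(v:ℂ) ^ H z‖ = v ^ (q/2) := by rw [hnorm v hv, hHz]
    have par : ‖(a:ℂ) ^ G z + (b:ℂ) ^ G z‖ ^ 2 + ‖(a:ℂ) ^ G z - (b:ℂ) ^ G z‖ ^ 2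
        = 2 * S := by
      have hpar := parallelogram_law_with_norm ℂ ((a:ℂ) ^ G z) ((b:ℂ) ^ G z)
      have e1 : a ^ (p/2) * a ^ (p/2) = a ^ p := by
        rw [← Real.rpow_add ha0]; ring_nf
      have e2 : b ^ (p/2) * b ^ (p/2) = b ^ p := by
        rw [← Real.rpow_add hb0]; ring_nf
      have := hpar
      rw [hA, hB] at this
      rw [this, sq, sq, e1, e2, hS_def]
      try ring
    have hsq : ‖(u:ℂ) ^ H z‖ ^ 2 + ‖(v:ℂ) ^ H z‖ ^ 2 = R := by
      have e1 : u ^ (q/2) * u ^ (q/2) = u ^ q := by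
        rw [← Real.rpow_add hu]; ring_nf
      have e2 : v ^ (q/2) * v ^ (q/2) = v ^ q := by
        rw [← Real.rpow_add hv]; ring_nf
      rw [hU, hV, sq, sq, e1, e2, hR_def]
    calc ‖f z‖ ≤ _ := hfle z
      _ ≤ Real.sqrt (‖(a:ℂ) ^ G z + (b:ℂ) ^ G z‖ ^ 2 + ‖(a:ℂ) ^ G z - (b:ℂ) ^ G z‖ ^ 2)
          * Real.sqrt (‖(u:ℂ) ^ H z‖ ^ 2 + ‖(v:ℂ) ^ H z‖ ^ 2) := by
            have := cs2 (‖(a:ℂ) ^ G z + (b:ℂ) ^ G z‖) (‖(a:ℂ) ^ G z - (b:ℂ) ^ G z‖)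
              (‖(u:ℂ) ^ H z‖) (‖(v:ℂ) ^ H z‖)
            linarith [this]
      _ = M0 := by rw [par, hsq, hM0_def]
  -- bound on the line re = 1
  set M1 : ℝ := S * R with hM1_def
  have hM1 : ∀ z ∈ Complex.re ⁻¹' {1}, ‖f z‖ ≤ M1 := by
    intro z hz
    have hz1 : z.re = 1 := hz
    have hGz : (G z).re = p := by rw [hGre, hz1]; ring
    have hHz : (H z).re = q := by rw [hHre, hz1]; ring
    have hA : ‖(a:ℂ) ^ G z‖ = a ^ p := by rw [hnorm a ha0, hGz]
    have hB : ‖(b:ℂ) ^ G z‖ = b ^ p := by rw [hnorm b hb0, hGz]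
    have hU : ‖(u:ℂ) ^ H z‖ = u ^ q := by rw [hnorm u hu, hHz]
    have hV : ‖(v:ℂ) ^ H z‖ = v ^ q := by rw [hnorm v hv, hHz]
    have h1 : ‖(a:ℂ) ^ G z + (b:ℂ) ^ G z‖ ≤ a ^ p + b ^ p := by
      calc ‖(a:ℂ) ^ G z + (b:ℂ) ^ G z‖ ≤ ‖(a:ℂ) ^ G z‖ + ‖(b:ℂ) ^ G z‖ := norm_add_le _ _
        _ = a ^ p + b ^ p := by rw [hA, hB]
    have h2 : ‖(a:ℂ) ^ G z - (b:ℂ) ^ G z‖ ≤ a ^ p + b ^ p := by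
      calc ‖(a:ℂ) ^ G z - (b:ℂ) ^ G z‖ ≤ ‖(a:ℂ) ^ G z‖ + ‖(b:ℂ) ^ G z‖ := norm_sub_le _ _
        _ = a ^ p + b ^ p := by rw [hA, hB]
    calc ‖f z‖ ≤ _ := hfle z
      _ ≤ (a ^ p + b ^ p) * (u ^ q) + (a ^ p + b ^ p) * (v ^ q) := by
          rw [hU, hV]
          gcongr <;> positivity
      _ = M1 := by rw [hM1_def, hS_def, hR_def]; ring
  -- global bound on the closed strip
  have hB : BddAbove ((norm ∘ f) '' (Complex.HadamardThreeLines.verticalClosedStrip 0 1)) := by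
    refine ⟨(a ^ (p/2) + a ^ p + (b ^ (p/2) + b ^ p)) *
      ((u ^ (q/2) + u ^ q) + (v ^ (q/2) + v ^ q)), ?_⟩
    rintro x ⟨z, hz, rfl⟩
    have hz' : z.re ∈ Set.Icc (0:ℝ) 1 := hz
    have hbnd : ∀ (r : ℝ), 0 < r → ∀ (c : ℝ), 0 < c →
        r ^ (c / 2 * (1 + z.re)) ≤ r ^ (c/2) + r ^ c := by
      intro r hr c hc
      apply rpow_le_endpoints hr
      · nlinarith [hz'.1]
      · nlinarith [hz'.2]
    have hA : ‖(a:ℂ) ^ G z‖ ≤ a ^ (p/2) + a ^ p := by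
      rw [hnorm a ha0, hGre]; exact hbnd a ha0 p hp0
    have hB2 : ‖(b:ℂ) ^ G z‖ ≤ b ^ (p/2) + b ^ p := by
      rw [hnorm b hb0, hGre]; exact hbnd b hb0 p hp0
    have hU : ‖(u:ℂ) ^ H z‖ ≤ u ^ (q/2) + u ^ q := by
      rw [hnorm u hu, hHre]; exact hbnd u hu q hq0
    have hV : ‖(v:ℂ) ^ H z‖ ≤ v ^ (q/2) + v ^ q := by
      rw [hnorm v hv, hHre]; exact hbnd v hv q hq0
    have h1 : ‖(a:ℂ) ^ G z + (b:ℂ) ^ G z‖ ≤ a ^ (p/2) + a ^ p + (b ^ (p/2) + b ^ p) :=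
      (norm_add_le _ _).trans (add_le_add hA hB2)
    have h2 : ‖(a:ℂ) ^ G z - (b:ℂ) ^ G z‖ ≤ a ^ (p/2) + a ^ p + (b ^ (p/2) + b ^ p) :=
      (norm_sub_le _ _).trans (add_le_add hA hB2)
    calc (norm ∘ f) z = ‖f z‖ := rfl
      _ ≤ _ := hfle z
      _ ≤ (a ^ (p/2) + a ^ p + (b ^ (p/2) + b ^ p)) * (u ^ (q/2) + u ^ q)
          + (a ^ (p/2) + a ^ p + (b ^ (p/2) + b ^ p)) * (v ^ (q/2) + v ^ q) := by
          exact add_le_add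
            (mul_le_mul h1 hU (norm_nonneg _) (by positivity))
            (mul_le_mul h2 hV (norm_nonneg _) (by positivity))
      _ = _ := by ring
  -- apply the three lines theorem at z = θ
  have hmem : (θ : ℂ) ∈ Complex.HadamardThreeLines.verticalClosedStrip 0 1 := by
    simp only [Complex.HadamardThreeLines.verticalClosedStrip, Set.mem_preimage,
      Complex.ofReal_re, Set.mem_Icc]
    exact ⟨hθ0.le, hθ1.le⟩
  have key := Complex.HadamardThreeLines.norm_le_interp_of_mem_verticalClosedStrip₀₁' f
    hmem (hfd.diffContOnCl) hB hM0 hM1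
  rw [Complex.ofReal_re] at key
  -- compute f θ
  have hGθ : G (θ:ℂ) = 1 := by
    simp only [hG_def]
    have e : ((p/2 : ℝ) : ℂ) * (1 + (θ:ℂ)) = ((p/2 * (1 + θ) : ℝ) : ℂ) := by
      push_cast; ring
    rw [e]
    have e2 : p/2 * (1 + θ) = 1 := by rw [hθ_def]; field_simp; ring
    rw [e2, Complex.ofReal_one]
  have hHθ : H (θ:ℂ) = ((q - 1 : ℝ) : ℂ) := by
    simp only [hH_def]
    have h1 : ((q/2 : ℝ) : ℂ) * (1 + (θ:ℂ)) = ((q/2 * (1 + θ) : ℝ) : ℂ) := by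
      push_cast; ring
    rw [h1]
    congr 1
    rw [hθ_def, hq]
    field_simp
    ring
  have hfθ : f (θ:ℂ) = ((R : ℝ) : ℂ) := by
    have e1 : u * u ^ (q-1) = u ^ q := by
      nth_rewrite 1 [← Real.rpow_one u]
      rw [← Real.rpow_add hu]; ring_nf
    have e2 : v * v ^ (q-1) = v ^ q := by
      nth_rewrite 1 [← Real.rpow_one v]
      rw [← Real.rpow_add hv]; ring_nf
    have c1 : (a:ℂ) + (b:ℂ) = ((u:ℝ):ℂ) := by rw [hu_def]; push_cast; ring
    have c2 : (a:ℂ) - (b:ℂ) = ((v:ℝ):ℂ) := by rw [hv_def]; push_cast; ring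
    simp only [hf_def, hGθ, hHθ]
    rw [Complex.cpow_one, Complex.cpow_one,
      ← Complex.ofReal_cpow hu.le, ← Complex.ofReal_cpow hv.le, c1, c2,
      ← Complex.ofReal_mul, ← Complex.ofReal_mul, ← Complex.ofReal_add]
    congr 1
    rw [hR_def, ← e1, ← e2]
  rw [hfθ] at key
  have hnR : ‖((R:ℝ) : ℂ)‖ = R := by
    rw [Complex.norm_real, Real.norm_eq_abs, abs_of_pos hR]
  rw [hnR] at key
  -- now the rpow algebra
  have exp1 : 1/2 * (1 - θ) = 1/q := by rw [hθ_def, hq]; field_simp; try ring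
  have exp2 : 1/q + θ = 1/p := by rw [hθ_def, hq]; field_simp; try ring
  have hsum : 1/q + 1/p = (1:ℝ) := by rw [hq]; field_simp; try ring
  have m0 : M0 ^ (1 - θ) = 2 ^ (1/q) * S ^ (1/q) * R ^ (1/q) := by
    rw [hM0_def, ← Real.sqrt_mul (by positivity), Real.sqrt_eq_rpow,
      ← Real.rpow_mul (by positivity), exp1,
      Real.mul_rpow (by positivity) hR.le,
      Real.mul_rpow (by norm_num) hS.le]
  have m1 : M1 ^ θ = S ^ θ * R ^ θ := by
    rw [hM1_def, Real.mul_rpow hS.le hR.le]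
  have key3 : R ≤ 2 ^ (1/q) * S ^ (1/p) * R ^ (1/p) := by
    calc R ≤ M0 ^ (1 - θ) * M1 ^ θ := key
      _ = 2 ^ (1/q) * (S ^ (1/q) * S ^ θ) * (R ^ (1/q) * R ^ θ) := by
          rw [m0, m1]; ring
      _ = 2 ^ (1/q) * S ^ (1/q + θ) * R ^ (1/q + θ) := by
          rw [Real.rpow_add hS, Real.rpow_add hR]
      _ = 2 ^ (1/q) * S ^ (1/p) * R ^ (1/p) := by rw [exp2]
  have hc : R ^ (1/q) ≤ 2 ^ (1/q) * S ^ (1/p) := by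
    have hRp : (0:ℝ) < R ^ (1/p) := Real.rpow_pos_of_pos hR _
    apply le_of_mul_le_mul_right _ hRp
    calc R ^ (1/q) * R ^ (1/p) = R ^ ((1:ℝ)/q + 1/p) := (Real.rpow_add hR _ _).symm
      _ = R := by rw [hsum, Real.rpow_one]
      _ ≤ 2 ^ (1/q) * S ^ (1/p) * R ^ (1/p) := key3
  have h1 : (R ^ ((1:ℝ)/q)) ^ q ≤ (2 ^ ((1:ℝ)/q) * S ^ ((1:ℝ)/p)) ^ q :=
    Real.rpow_le_rpow (by positivity) hc hq0.le
  rw [← Real.rpow_mul hR.le, one_div_mul_cancel hq0.ne', Real.rpow_one,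
    Real.mul_rpow (by positivity) (by positivity),
    ← Real.rpow_mul (by norm_num : (0:ℝ) ≤ 2), one_div_mul_cancel hq0.ne', Real.rpow_one,
    ← Real.rpow_mul hS.le] at h1
  have expf : 1/p * q = q - 1 := by rw [hq]; field_simp; try ring
  rw [expf] at h1
  exact h1

lemma abs_add_sub_rpow (a b : ℝ) (q : ℝ) :
    |a + b| ^ q + |a - b| ^ q
      = (max |a| |b| + min |a| |b|) ^ q + (max |a| |b| - min |a| |b|) ^ q := by
  rw [max_add_min, (max_sub_min_eq_abs _ _).trans (abs_sub_comm _ _)]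
  rcases le_total 0 (a * b) with h | h
  · have h1 : |a + b| = |a| + |b| := by
      rw [← Real.sqrt_sq_eq_abs, ← Real.sqrt_sq (by positivity : (0:ℝ) ≤ |a| + |b|)]
      congr 1
      nlinarith [abs_mul a b, abs_of_nonneg h, sq_abs a, sq_abs b]
    have h2 : |a - b| = abs (|a| - |b|) := by
      rw [← Real.sqrt_sq_eq_abs, ← Real.sqrt_sq_eq_abs (x := |a| - |b|)]
      congr 1
      nlinarith [abs_mul a b, abs_of_nonneg h, sq_abs a, sq_abs b]
    rw [h1, h2]
  · have h1 : |a + b| = abs (|a| - |b|) := by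
      rw [← Real.sqrt_sq_eq_abs, ← Real.sqrt_sq_eq_abs (x := |a| - |b|)]
      congr 1
      nlinarith [abs_mul a b, abs_of_nonpos h, sq_abs a, sq_abs b]
    have h2 : |a - b| = |a| + |b| := by
      rw [← Real.sqrt_sq_eq_abs, ← Real.sqrt_sq (by positivity : (0:ℝ) ≤ |a| + |b|)]
      congr 1
      nlinarith [abs_mul a b, abs_of_nonpos h, sq_abs a, sq_abs b]
    rw [h1, h2]; ring

theorem stmt11 (p : ℝ) (hp1 : 1 < p) (hp2 : p < 2) (a b : ℝ) :
    |(a - b) / 2| ^ (p / (p - 1)) + |(a + b) / 2| ^ (p / (p - 1))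
      ≤ ((1 / 2) * |a| ^ p + (1 / 2) * |b| ^ p) ^ (1 / (p - 1)) := by
  have hpm1 : 0 < p - 1 := by linarith
  set q : ℝ := p / (p - 1) with hq
  have hq0 : 0 < q := by positivity
  set X : ℝ := max |a| |b| with hX
  set Y : ℝ := min |a| |b| with hYd
  have hY : 0 ≤ Y := le_min (abs_nonneg _) (abs_nonneg _)
  have hXY : Y ≤ X := min_le_max
  have hcore := core p q hp1 hp2 hq X Y hY hXY
  have hXYp : X ^ p + Y ^ p = |a| ^ p + |b| ^ p := by
    rcases le_total |a| |b| with h | h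
    · rw [hX, hYd, max_eq_right h, min_eq_left h]; ring
    · rw [hX, hYd, max_eq_left h, min_eq_right h]
  have habs : |a - b| ^ q + |a + b| ^ q = (X + Y) ^ q + (X - Y) ^ q := by
    rw [add_comm]; exact abs_add_sub_rpow a b q
  -- rewrite the goal
  have hexp : (1:ℝ) / (p - 1) = q - 1 := by rw [hq]; field_simp; ring
  have habs2 : |(a - b) / 2| = |a - b| / 2 := by
    rw [abs_div, abs_two]
  have habs3 : |(a + b) / 2| = |a + b| / 2 := by
    rw [abs_div, abs_two]
  have h2q : (2:ℝ) * 2 ^ (q - 1) = 2 ^ q := by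
    rw [show (2:ℝ) * 2 ^ (q-1) = 2 ^ (1:ℝ) * 2 ^ (q-1) by rw [Real.rpow_one],
      ← Real.rpow_add (by norm_num)]
    ring_nf
  have hS' : (0:ℝ) ≤ |a| ^ p + |b| ^ p := by positivity
  have h2qpos : (0:ℝ) < 2 ^ q := Real.rpow_pos_of_pos (by norm_num) q
  rw [hexp, habs2, habs3,
    Real.div_rpow (abs_nonneg _) (by norm_num),
    Real.div_rpow (abs_nonneg _) (by norm_num),
    show (1:ℝ)/2 * |a| ^ p + 1/2 * |b| ^ p = (|a| ^ p + |b| ^ p) / 2 by ring,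
    Real.div_rpow hS' (by norm_num),
    ← add_div, habs,
    div_le_div_iff₀ h2qpos (by positivity)]
  calc ((X + Y) ^ q + (X - Y) ^ q) * 2 ^ (q - 1)
      ≤ (2 * (X ^ p + Y ^ p) ^ (q - 1)) * 2 ^ (q - 1) :=
        mul_le_mul_of_nonneg_right hcore (by positivity)
    _ = (|a| ^ p + |b| ^ p) ^ (q - 1) * 2 ^ q := by
        rw [hXYp, ← h2q]; ring
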